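/- Let m,n ∈ ℤ with 3 ∣ m+n. Then for every x ∈ ℝ² and every p ∈ ℤ: V_{m,n}(R₁x) = −V_{m,n}(x), V_{m,n}(R₂x) = −V_{m,n}(x), and V_{m,n}(x + p·(e+ω)) = V_{m,n}(x), where R₁(x,y) = (x,−y), R₂(x,y) = ((−x + √3·y)/2, (√3·x + y)/2), e = (1,0) and ω = (1/2, √3/2). (Equivalently, V_{m,n}(gx + p(e+ω)) = ε(g)·V_{m,n}(x) for every g in the group generated by R₁ and R₂, where ε is the homomorphism sending R₁ and R₂ to −1.) -/

import Mathlib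

noncomputable section

/-- The frequency vector `k_{m,n}`. -/
def kvec (m n : ℤ) : ℝ × ℝ :=
  (2 * Real.pi / 3 * m, 2 * Real.pi / 3 * ((2 * (n : ℝ) - m) / Real.sqrt 3))

/-- The exponential `e_{m,n}(x) = exp(i k_{m,n} · x)`. -/
def efun (m n : ℤ) (x : ℝ × ℝ) : ℂ :=
  Complex.exp (Complex.I * ((((kvec m n).1 * x.1 + (kvec m n).2 * x.2 : ℝ)) : ℂ))

/-- The Dirichlet trigonometric eigenfunction `V_{m,n}`. -/
def Vfun (m n : ℤ) (x : ℝ × ℝ) : ℂ :=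
  efun m n x - efun m (m - n) x + efun (-n) (m - n) x - efun (-n) (-m) x
    + efun (n - m) (-m) x - efun (n - m) n x

/-- Reflection across the `x`-axis. -/
def R₁ (p : ℝ × ℝ) : ℝ × ℝ := (p.1, -p.2)

/-- Reflection across the line spanned by `(1/2, √3/2)`. -/
def R₂ (p : ℝ × ℝ) : ℝ × ℝ :=
  ((-p.1 + Real.sqrt 3 * p.2) / 2, (Real.sqrt 3 * p.1 + p.2) / 2)

/-- The vector `e = (1,0)`. -/
def evec : ℝ × ℝ := (1, 0)

/-- The vector `ω = (1/2, √3/2)`. -/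
def ωvec : ℝ × ℝ := (1 / 2, Real.sqrt 3 / 2)

lemma efun_R1 (m n : ℤ) (x : ℝ × ℝ) : efun m n (R₁ x) = efun m (m - n) x := by
  have h : (kvec m n).1 * (R₁ x).1 + (kvec m n).2 * (R₁ x).2
      = (kvec m (m - n)).1 * x.1 + (kvec m (m - n)).2 * x.2 := by
    simp only [kvec, R₁]
    push_cast
    ring
  unfold efun
  rw [h]

lemma efun_R2 (m n : ℤ) (x : ℝ × ℝ) : efun m n (R₂ x) = efun (n - m) n x := by
  have hs2 : Real.sqrt 3 ^ 2 = 3 := Real.sq_sqrt (by norm_num)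
  have hne : Real.sqrt 3 ≠ 0 := by positivity
  have h : (kvec m n).1 * (R₂ x).1 + (kvec m n).2 * (R₂ x).2
      = (kvec (n - m) n).1 * x.1 + (kvec (n - m) n).2 * x.2 := by
    simp only [kvec, R₂]
    push_cast
    field_simp
    linear_combination ((m:ℝ) * x.2) * hs2
  unfold efun
  rw [h]

lemma efun_trans (m n : ℤ) (h : (3 : ℤ) ∣ m + n) (x : ℝ × ℝ) (p : ℤ) :
    efun m n (x + (p : ℝ) • (evec + ωvec)) = efun m n x := by
  obtain ⟨k, hk⟩ := h
  have hk' : (m : ℝ) + n = 3 * k := by exact_mod_cast hk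
  have hs2 : Real.sqrt 3 ^ 2 = 3 := Real.sq_sqrt (by norm_num)
  have hne : Real.sqrt 3 ≠ 0 := by positivity
  have hx : x + (p : ℝ) • (evec + ωvec)
      = (x.1 + p * (3 / 2), x.2 + p * (Real.sqrt 3 / 2)) := by
    simp [evec, ωvec, Prod.ext_iff, Prod.smul_def]
    constructor <;> ring
  have h : (kvec m n).1 * (x + (p : ℝ) • (evec + ωvec)).1
      + (kvec m n).2 * (x + (p : ℝ) • (evec + ωvec)).2
      = ((kvec m n).1 * x.1 + (kvec m n).2 * x.2) + (p * k : ℤ) * (2 * Real.pi) := by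
    rw [hx]
    simp only [kvec]
    push_cast
    field_simp
    linear_combination (2 * (p:ℝ) * Real.sqrt 3) * hk'
  unfold efun
  rw [h]
  push_cast
  rw [mul_add, Complex.exp_add]
  have : Complex.I * ((p : ℂ) * k * (2 * Real.pi)) = (p * k : ℤ) * (2 * Real.pi * Complex.I) := by
    push_cast
    ring
  rw [this, Complex.exp_int_mul_two_pi_mul_I, mul_one]

/-- Anti-invariance of the Dirichlet eigenfunctions `V_{m,n}` (for `3 ∣ m+n`) under the
reflections `R₁`, `R₂`, and invariance under translation by integer multiples of `e + ω`. -/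
theorem Vfun_invariance (m n : ℤ) (hmn : (3 : ℤ) ∣ m + n) (x : ℝ × ℝ) (p : ℤ) :
    Vfun m n (R₁ x) = -Vfun m n x ∧ Vfun m n (R₂ x) = -Vfun m n x ∧
      Vfun m n (x + (p : ℝ) • (evec + ωvec)) = Vfun m n x := by
  refine ⟨?_, ?_, ?_⟩
  · simp only [Vfun, efun_R1,
      show m - (m - n) = n from by ring,
      show -n - (m - n) = -m from by ring,
      show -n - -m = m - n from by ring,
      show n - m - -m = n from by ring,
      show n - m - n = -m from by ring]
    ring
  · simp only [Vfun, efun_R2,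
      show m - n - m = -n from by ring,
      show m - n - -n = m from by ring,
      show -m - (n - m) = -n from by ring,
      show n - (n - m) = m from by ring]
    ring
  · simp only [Vfun]
    rw [efun_trans m n hmn, efun_trans m (m - n) (by omega), efun_trans (-n) (m - n) (by omega),
      efun_trans (-n) (-m) (by omega), efun_trans (n - m) (-m) (by omega),
      efun_trans (n - m) n (by omega)]

end
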